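/- For every real p ≥ 1, every b ≥ e and every integer k ≥ 1: Σ_{j=0}^{k−1} 2^{−pj} / (1 + b·2^{−pj}) ≤ 3 (ln b) / b. The same bound holds for the infinite sum Σ_{j=0}^{∞} 2^{−pj} / (1 + b·2^{−pj}). -/

import Mathlib

/-- For every `p ≥ 1`, `b ≥ e` and integer `k ≥ 1`,
`Σ_{j=0}^{k−1} 2^{−pj}/(1 + b 2^{−pj}) ≤ 3 (ln b)/b`, and the same bound holds for the
infinite sum. -/
theorem statement14 (p b : ℝ) (hp : 1 ≤ p) (hb : Real.exp 1 ≤ b) :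
    (∀ k : ℕ, 1 ≤ k →
      ∑ j ∈ Finset.range k,
        (2:ℝ) ^ (-(p * (j : ℝ))) / (1 + b * (2:ℝ) ^ (-(p * (j : ℝ)))) ≤
        3 * Real.log b / b) ∧
    ∑' j : ℕ, (2:ℝ) ^ (-(p * (j : ℝ))) / (1 + b * (2:ℝ) ^ (-(p * (j : ℝ)))) ≤
      3 * Real.log b / b := by
  have he2 : (2:ℝ) ≤ Real.exp 1 := by
    have := Real.add_one_le_exp (1:ℝ); linarith
  have hb0 : (0:ℝ) < b := lt_of_lt_of_le (Real.exp_pos 1) hb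
  have hb2 : (2:ℝ) ≤ b := le_trans he2 hb
  have hlogb : (1:ℝ) ≤ Real.log b := by
    rw [Real.le_log_iff_exp_le hb0]; simpa using hb
  set f : ℕ → ℝ := fun j =>
    (2:ℝ) ^ (-(p * (j : ℝ))) / (1 + b * (2:ℝ) ^ (-(p * (j : ℝ)))) with hf
  set g : ℕ → ℝ := fun j => Real.log (1 + b * (2:ℝ) ^ (-(p * (j : ℝ)))) with hg
  have ht : ∀ j : ℕ, (0:ℝ) < (2:ℝ) ^ (-(p * (j : ℝ))) :=
    fun j => Real.rpow_pos_of_pos two_pos _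
  have hden : ∀ j : ℕ, (0:ℝ) < 1 + b * (2:ℝ) ^ (-(p * (j : ℝ))) := by
    intro j; have := ht j; nlinarith
  have hfnn : ∀ j : ℕ, 0 ≤ f j := fun j => div_nonneg (ht j).le (hden j).le
  have hgnn : ∀ j : ℕ, 0 ≤ g j := by
    intro j
    apply Real.log_nonneg
    have := ht j; nlinarith
  have key : ∀ j : ℕ, f j ≤ 2 / b * (g j - g (j + 1)) := by
    intro j
    set t : ℝ := (2:ℝ) ^ (-(p * (j : ℝ))) with hT
    have htp : 0 < t := ht j
    have hs : (2:ℝ) ^ (-(p * ((j:ℕ)+1 : ℕ) : ℝ)) ≤ t / 2 := by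
      have h1 : (-(p * ((j:ℕ)+1 : ℕ) : ℝ)) = (-(p * (j:ℝ))) + (-p) := by
        push_cast; ring
      rw [h1, Real.rpow_add two_pos]
      have h2 : (2:ℝ) ^ (-p) ≤ (2:ℝ) ^ (-1 : ℝ) :=
        Real.rpow_le_rpow_of_exponent_le one_le_two (by linarith)
      have h3 : (2:ℝ) ^ (-1 : ℝ) = 1/2 := by
        rw [Real.rpow_neg_one]; norm_num
      calc t * (2:ℝ)^(-p) ≤ t * (1/2) := by
            rw [← h3]; exact mul_le_mul_of_nonneg_left h2 htp.le
        _ = t / 2 := by ring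
    set s : ℝ := (2:ℝ) ^ (-(p * ((j:ℕ)+1 : ℕ) : ℝ)) with hS
    have hsp : 0 < s := ht (j+1)
    have hd1 : (0:ℝ) < 1 + b * t := hden j
    have hd2 : (0:ℝ) < 1 + b * s := hden (j+1)
    have hlog : Real.log (1 + b * s) - Real.log (1 + b * t) ≤
        (1 + b * s) / (1 + b * t) - 1 := by
      have := Real.log_le_sub_one_of_pos (div_pos hd2 hd1)
      rwa [Real.log_div hd2.ne' hd1.ne'] at this
    have hgj : g j = Real.log (1 + b * t) := rfl
    have hgj1 : g (j + 1) = Real.log (1 + b * s) := by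
      simp only [hg, hS]
    rw [hgj, hgj1]
    have h4 : (1 + b * s) / (1 + b * t) - 1 = (b * s - b * t) / (1 + b * t) := by
      field_simp; ring
    have h5 : b * (t - s) / (1 + b * t) ≤
        Real.log (1 + b * t) - Real.log (1 + b * s) := by
      rw [h4] at hlog
      have : (b * s - b * t) / (1 + b * t) = -(b * (t - s) / (1 + b * t)) := by
        ring
      rw [this] at hlog
      linarith
    have h6 : b * (t / 2) / (1 + b * t) ≤ b * (t - s) / (1 + b * t) := by
      gcongr
      nlinarith
    have h7 : f j = t / (1 + b * t) := rfl
    rw [h7]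
    have : t / (1 + b * t) = 2 / b * (b * (t / 2) / (1 + b * t)) := by
      field_simp
    rw [this]
    apply mul_le_mul_of_nonneg_left _ (by positivity : (0:ℝ) ≤ 2 / b)
    linarith
  have hbound : ∀ k : ℕ, ∑ j ∈ Finset.range k, f j ≤ 3 * Real.log b / b := by
    intro k
    have h1 : ∑ j ∈ Finset.range k, f j ≤
        ∑ j ∈ Finset.range k, 2 / b * (g j - g (j + 1)) :=
      Finset.sum_le_sum fun j _ => key j
    have h2 : ∑ j ∈ Finset.range k, 2 / b * (g j - g (j + 1)) =
        2 / b * (g 0 - g k) := by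
      rw [← Finset.mul_sum, Finset.sum_range_sub']
    have hg0 : g 0 = Real.log (1 + b) := by
      simp [hg]
    have h3 : 2 / b * (g 0 - g k) ≤ 2 / b * Real.log (1 + b) := by
      apply mul_le_mul_of_nonneg_left _ (by positivity : (0:ℝ) ≤ 2 / b)
      have := hgnn k; rw [hg0]; linarith [hg0 ▸ hgnn 0]
    have hlog1b : Real.log (1 + b) ≤ Real.log b + 1 / b := by
      have h := Real.log_le_sub_one_of_pos (by positivity : (0:ℝ) < (1 + b) / b)
      rw [Real.log_div (by linarith) hb0.ne'] at h
      have : (1 + b) / b - 1 = 1 / b := by field_simp; ring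
      linarith [this ▸ h]
    have hfin : 2 * Real.log (1 + b) ≤ 3 * Real.log b := by
      have h1b : 1 / b ≤ 1 / 2 := by
        apply div_le_div_of_nonneg_left one_pos.le two_pos hb2 |>.trans_eq rfl
      nlinarith
    calc ∑ j ∈ Finset.range k, f j ≤ 2 / b * Real.log (1 + b) := by
          linarith
      _ ≤ 3 * Real.log b / b := by
          rw [div_mul_eq_mul_div, div_le_div_iff₀ hb0 hb0]
          nlinarith
  constructor
  · intro k _; exact hbound k
  · have hsum : Summable f := summable_of_sum_range_le hfnn hbound
    exact hsum.tsum_le_of_sum_range_le hbound
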